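/- arXiv:math/0309439 — 3 statements merged into one kernel-verified Lean document; each statement's English description precedes it below -/
import Mathlib

section
/- Let V be a finite-dimensional complex vector space, a > 0, (B_m)_{m≥2} a sequence in End(V) with Σ_{m≥2} B_m y^{−m} absolutely convergent for y > a, and g : (a,∞) → GL(V) a C¹ function with g(y)^{−1}·g'(y) = Σ_{m≥2} B_m y^{−m}, admitting for large y the convergent expansions g(y) = g(∞)·(1 + Σ_{k≥1} g_k y^{−k}) and g(y)^{−1} = (1 + Σ_{k≥1} f_k y^{−k})·g(∞)^{−1}. Suppose N_0 ∈ End(V) satisfies (ad N_0)^m B_m = 0 for every m ≥ 2. Then (ad N_0)^{k+1} g_k = 0 and (ad N_0)^{k+1} f_k = 0 for every k ≥ 1. -/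
noncomputable section

attribute [local instance 100] LieRing.ofAssociativeRing

open Finset Filter Topology

namespace ExpKer

lemma zp1 (y : ℝ) (k : ℕ) : y ^ (-(k:ℤ)-1) = (y^(k+1))⁻¹ := by
  rw [show -(k:ℤ)-1 = -((k+1:ℕ):ℤ) by push_cast; ring, zpow_neg, zpow_natCast]

lemma zp2 (y : ℝ) (k : ℕ) : y ^ (-(k:ℤ)-2) = (y^(k+2))⁻¹ := by
  rw [show -(k:ℤ)-2 = -((k+2:ℕ):ℤ) by push_cast; ring, zpow_neg, zpow_natCast]

variable {E : Type*} [NormedAddCommGroup E] [NormedSpace ℝ E]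

lemma norm_zpow_smul (y : ℝ) (hy : 0 < y) (e : ℤ) (v : E) :
    ‖(y^e : ℝ) • v‖ = ‖v‖ * y^e := by
  rw [norm_smul, Real.norm_eq_abs, abs_of_pos (zpow_pos hy e), mul_comm]

lemma summable_smul_of_norm [CompleteSpace E] {c : ℕ → E} {y : ℝ} (hy : 0 < y)
    (h : Summable fun k : ℕ => ‖c k‖ * y ^ (-(k:ℤ)-1)) :
    Summable fun k : ℕ => (y ^ (-(k:ℤ)-1) : ℝ) • c k := by
  apply Summable.of_norm
  simpa only [norm_zpow_smul y hy] using h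

lemma summable_smul_of_norm2 [CompleteSpace E] {c : ℕ → E} {y : ℝ} (hy : 0 < y)
    (h : Summable fun k : ℕ => ‖c k‖ * y ^ (-(k:ℤ)-2)) :
    Summable fun k : ℕ => (y ^ (-(k:ℤ)-2) : ℝ) • c k := by
  apply Summable.of_norm
  simpa only [norm_zpow_smul y hy] using h

lemma summable_step {c : ℕ → ℝ} {y : ℝ} (h0 : 0 < y)
    (h : Summable fun k : ℕ => c k * y ^ (-(k:ℤ)-1)) :
    Summable fun k : ℕ => c k * y ^ (-(k:ℤ)-2) := by
  have h' := h.mul_right y⁻¹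
  apply h'.congr
  intro k
  rw [mul_assoc, zp1, zp2]
  congr 1
  rw [← mul_inv, ← pow_succ]

lemma summable_shift {c : ℕ → ℝ} {y : ℝ} (h0 : 0 < y)
    (h : Summable fun k : ℕ => c k * y ^ (-(k:ℤ)-1)) :
    Summable fun k : ℕ => c (k+1) * y ^ (-(k:ℤ)-2) := by
  have h' := (_root_.summable_nat_add_iff 1).mpr h
  apply h'.congr
  intro k
  congr 1
  push_cast
  ring

lemma summable_deriv_bound {c : ℕ → ℝ} {y z : ℝ} (h0 : 0 < y) (hyz : y < z)
    (hc : ∀ k, 0 ≤ c k) (h : Summable fun k : ℕ => c k * y ^ (-(k:ℤ)-1)) :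
    Summable fun k : ℕ => ((k:ℝ)+1) * (c k * z ^ (-(k:ℤ)-2)) := by
  have h0z : 0 < z := h0.trans hyz
  set r := y / z with hrdef
  have hr0 : 0 < r := by positivity
  have hr1 : r < 1 := by rw [hrdef, div_lt_one h0z]; exact hyz
  have hs0 : Summable fun n : ℕ => (n:ℝ)^1 * r^n :=
    summable_pow_mul_geometric_of_norm_lt_one 1
      (by rw [Real.norm_eq_abs, abs_of_pos hr0]; exact hr1)
  have hs : Summable fun k : ℕ => ((k:ℝ)+1) * r^(k+1) := by
    have h2 := (_root_.summable_nat_add_iff 1).mpr hs0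
    apply h2.congr
    intro k
    push_cast
    ring
  set M := ∑' k : ℕ, ((k:ℝ)+1) * r^(k+1) with hM
  have hMk : ∀ k : ℕ, ((k:ℝ)+1) * r^(k+1) ≤ M :=
    fun k => Summable.le_tsum hs k (fun j _ => by positivity)
  have key : ∀ k:ℕ, ((k:ℝ)+1) * (c k * z ^ (-(k:ℤ)-2))
      = (c k * y ^ (-(k:ℤ)-1)) * ((((k:ℝ)+1) * r^(k+1)) * z⁻¹) := by
    intro k
    rw [zp1, zp2, hrdef, div_pow]
    have hy' : y ≠ 0 := h0.ne'
    have hz' : z ≠ 0 := h0z.ne'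
    field_simp
    ring
  apply Summable.of_nonneg_of_le (fun k => ?_) (fun k => ?_) (h.mul_right (M * z⁻¹))
  · have h1 : (0:ℝ) ≤ c k * z ^ (-(k:ℤ)-2) := mul_nonneg (hc k) (le_of_lt (zpow_pos h0z _))
    positivity
  · rw [key k]
    have h1 : (0:ℝ) ≤ c k * y ^ (-(k:ℤ)-1) := mul_nonneg (hc k) (le_of_lt (zpow_pos h0 _))
    exact mul_le_mul_of_nonneg_left
      (mul_le_mul_of_nonneg_right (hMk k) (by positivity)) h1

set_option maxHeartbeats 1000000 in
lemma c0_zero [CompleteSpace E] {b : ℝ} (hb : 0 < b) (c : ℕ → E)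
    (hsum : ∀ y : ℝ, b < y → Summable fun k : ℕ => ‖c k‖ * y ^ (-(k:ℤ)-1))
    (hzero : ∀ y : ℝ, b < y → ∑' k : ℕ, (y ^ (-(k:ℤ)-1) : ℝ) • c k = 0) :
    c 0 = 0 := by
  set y₀ : ℝ := b + 1 with hy₀def
  have hby₀ : b < y₀ := by simp [hy₀def]
  have h0y₀ : (0:ℝ) < y₀ := by rw [hy₀def]; linarith
  have hC := hsum y₀ hby₀
  set C : ℝ := ∑' k : ℕ, ‖c k‖ * y₀ ^ (-(k:ℤ)-1) with hCdef
  have key : ∀ y : ℝ, y₀ ≤ y → ‖c 0‖ ≤ C * y₀^2 / y := by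
    intro y hy
    have hby : b < y := lt_of_lt_of_le hby₀ hy
    have h0y : 0 < y := lt_of_lt_of_le h0y₀ hy
    have hsy := hsum y hby
    have hs : Summable fun k : ℕ => (y ^ (-(k:ℤ)-1) : ℝ) • c k := summable_smul_of_norm h0y hsy
    have h1 := Summable.tsum_eq_zero_add hs
    rw [hzero y hby] at h1
    have hf0 : (y ^ (-((0:ℕ):ℤ)-1) : ℝ) • c 0
        = - ∑' k:ℕ, (y ^ (-((k+1:ℕ):ℤ)-1):ℝ) • c (k+1) :=
      add_eq_zero_iff_eq_neg.mp h1.symm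
    have hshift : Summable fun k : ℕ => ‖c (k+1)‖ * y ^ (-(k:ℤ)-2) :=
      summable_shift h0y hsy
    have hshift₀ : Summable fun k : ℕ => ‖c (k+1)‖ * y₀ ^ (-(k:ℤ)-2) :=
      summable_shift h0y₀ hC
    have hnorm : ‖c 0‖ * y⁻¹ ≤ ∑' k:ℕ, ‖c (k+1)‖ * y ^ (-(k:ℤ)-2) := by
      have e0 : ‖(y ^ (-((0:ℕ):ℤ)-1) : ℝ) • c 0‖ = ‖c 0‖ * y⁻¹ := by
        rw [norm_zpow_smul y h0y]
        congr 1
        rw [zp1]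
        norm_num
      rw [← e0, hf0, norm_neg]
      calc ‖∑' k:ℕ, (y ^ (-((k+1:ℕ):ℤ)-1):ℝ) • c (k+1)‖
          ≤ ∑' k:ℕ, ‖(y ^ (-((k+1:ℕ):ℤ)-1):ℝ) • c (k+1)‖ := by
            apply norm_tsum_le_tsum_norm
            apply Summable.congr hshift
            intro k
            rw [norm_zpow_smul y h0y]
            congr 1
            push_cast
            ring
        _ = ∑' k:ℕ, ‖c (k+1)‖ * y ^ (-(k:ℤ)-2) := by
            apply tsum_congr
            intro k
            rw [norm_zpow_smul y h0y]
            congr 1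
            push_cast
            ring
    have hterm : ∀ k : ℕ, ‖c (k+1)‖ * y ^ (-(k:ℤ)-2)
        ≤ (‖c (k+1)‖ * y₀ ^ (-(k:ℤ)-2)) * ((y₀/y)^2) := by
      intro k
      rw [zp2, zp2]
      have e : (y₀^(k+2):ℝ)⁻¹ * (y₀/y)^2 = (y₀^k * y^2)⁻¹ := by
        rw [div_pow]
        field_simp
        ring
      rw [mul_assoc, e]
      apply mul_le_mul_of_nonneg_left ?_ (norm_nonneg _)
      apply inv_anti₀ (by positivity)
      calc y₀^k * y^2 ≤ y^k * y^2 := by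
            apply mul_le_mul_of_nonneg_right (pow_le_pow_left₀ h0y₀.le hy k) (by positivity)
        _ = y^(k+2) := by ring
    have hsum_le : ∑' k:ℕ, ‖c (k+1)‖ * y ^ (-(k:ℤ)-2)
        ≤ (∑' k:ℕ, ‖c (k+1)‖ * y₀ ^ (-(k:ℤ)-2)) * ((y₀/y)^2) := by
      calc ∑' k:ℕ, ‖c (k+1)‖ * y ^ (-(k:ℤ)-2)
          ≤ ∑' k:ℕ, (‖c (k+1)‖ * y₀ ^ (-(k:ℤ)-2)) * ((y₀/y)^2) :=
            Summable.tsum_le_tsum hterm hshift (hshift₀.mul_right _)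
        _ = _ := tsum_mul_right
    have hCc : ∑' k:ℕ, ‖c (k+1)‖ * y₀ ^ (-(k:ℤ)-2) ≤ C := by
      have e1 : ∑' k:ℕ, ‖c (k+1)‖ * y₀ ^ (-(k:ℤ)-2)
          = ∑' k:ℕ, ‖c (k+1)‖ * y₀ ^ (-((k+1:ℕ):ℤ)-1) := by
        apply tsum_congr
        intro k
        congr 1
        push_cast
        ring
      rw [e1, hCdef, Summable.tsum_eq_zero_add hC]
      exact le_add_of_nonneg_left (by positivity)
    have hfin : ‖c 0‖ * y⁻¹ ≤ C * (y₀/y)^2 := by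
      calc ‖c 0‖ * y⁻¹ ≤ ∑' k:ℕ, ‖c (k+1)‖ * y ^ (-(k:ℤ)-2) := hnorm
        _ ≤ (∑' k:ℕ, ‖c (k+1)‖ * y₀ ^ (-(k:ℤ)-2)) * ((y₀/y)^2) := hsum_le
        _ ≤ C * (y₀/y)^2 := mul_le_mul_of_nonneg_right hCc (by positivity)
    have := mul_le_mul_of_nonneg_right hfin h0y.le
    calc ‖c 0‖ = ‖c 0‖ * y⁻¹ * y := by field_simp
      _ ≤ C * (y₀/y)^2 * y := this
      _ = C * y₀^2 / y := by field_simp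
  have hlim : Tendsto (fun y : ℝ => C * y₀^2 / y) atTop (𝓝 0) :=
    tendsto_const_nhds.div_atTop tendsto_id
  have hle : ‖c 0‖ ≤ 0 := ge_of_tendsto hlim (eventually_atTop.mpr ⟨y₀, key⟩)
  exact norm_le_zero_iff.mp hle

set_option maxHeartbeats 1000000 in
lemma coeff_eq_zero [CompleteSpace E] {b : ℝ} (hb : 0 < b) :
    ∀ (n : ℕ) (c : ℕ → E),
      (∀ y : ℝ, b < y → Summable fun k : ℕ => ‖c k‖ * y ^ (-(k:ℤ)-1)) →
      (∀ y : ℝ, b < y → ∑' k : ℕ, (y ^ (-(k:ℤ)-1) : ℝ) • c k = 0) →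
      c n = 0 := by
  intro n
  induction n with
  | zero => intro c hs hz; exact c0_zero hb c hs hz
  | succ n ih =>
    intro c hs hz
    have h0 : c 0 = 0 := c0_zero hb c hs hz
    refine ih (fun k => c (k+1)) (fun y hy => ?_) (fun y hy => ?_)
    · have h0y : (0:ℝ) < y := hb.trans hy
      have h1 : Summable fun k : ℕ => ‖c (k+1)‖ * y ^ (-(k:ℤ)-2) :=
        summable_shift h0y (hs y hy)
      apply (h1.mul_right y).congr
      intro k
      rw [mul_assoc, zp1, zp2, pow_succ, mul_inv, mul_assoc,
        inv_mul_cancel₀ h0y.ne', mul_one]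
    · have h0y : (0:ℝ) < y := hb.trans hy
      have hsv : Summable fun k : ℕ => (y ^ (-(k:ℤ)-1) : ℝ) • c k :=
        summable_smul_of_norm h0y (hs y hy)
      have h1 := Summable.tsum_eq_zero_add hsv
      rw [hz y hy, h0, smul_zero, zero_add] at h1
      have hsv2 : Summable fun k : ℕ => (y ^ (-(k:ℤ)-1) : ℝ) • c (k+1) := by
        apply summable_smul_of_norm h0y
        have h2 : Summable fun k : ℕ => ‖c (k+1)‖ * y ^ (-(k:ℤ)-2) :=
          summable_shift h0y (hs y hy)
        apply (h2.mul_right y).congr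
        intro k
        rw [mul_assoc, zp1, zp2, pow_succ, mul_inv, mul_assoc,
          inv_mul_cancel₀ h0y.ne', mul_one]
      have h2 : ∑' k:ℕ, (y ^ (-((k+1:ℕ):ℤ)-1):ℝ) • c (k+1)
          = y⁻¹ • ∑' k:ℕ, (y ^ (-(k:ℤ)-1):ℝ) • c (k+1) := by
        rw [← Summable.tsum_const_smul (y⁻¹) hsv2]
        apply tsum_congr
        intro k
        rw [smul_smul]
        congr 1
        rw [zp1 y k, show -((k+1:ℕ):ℤ)-1 = -(k:ℤ)-2 by push_cast; ring, zp2,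
          pow_succ, mul_inv, mul_comm ((y:ℝ)^(k+1))⁻¹ y⁻¹]
      rw [h2] at h1
      have h3 := (smul_eq_zero.mp h1.symm).resolve_left (inv_ne_zero h0y.ne')
      exact h3


set_option maxHeartbeats 1000000 in
lemma cauchy_product {A : Type*} [NormedRing A] [NormedSpace ℝ A] [CompleteSpace A]
    [IsScalarTower ℝ A A] [SMulCommClass ℝ A A]
    (u v : ℕ → A) (σ τ : ℤ) {y : ℝ} (hy : 0 < y)
    (hu : Summable fun k : ℕ => ‖u k‖ * y ^ (-(k:ℤ) - σ))
    (hv : Summable fun k : ℕ => ‖v k‖ * y ^ (-(k:ℤ) - τ)) :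
    ((∑' k : ℕ, (y ^ (-(k:ℤ) - σ) : ℝ) • u k) * ∑' k : ℕ, (y ^ (-(k:ℤ) - τ) : ℝ) • v k)
      = (∑' n : ℕ, (y ^ (-(n:ℤ) - σ - τ) : ℝ) • ∑ kl ∈ antidiagonal n, u kl.1 * v kl.2)
    ∧ Summable fun n : ℕ => ‖∑ kl ∈ antidiagonal n, u kl.1 * v kl.2‖ * y ^ (-(n:ℤ) - σ - τ) := by
  have hu' : Summable fun k : ℕ => ‖(y ^ (-(k:ℤ) - σ) : ℝ) • u k‖ := by
    simp only [norm_zpow_smul y hy]; exact hu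
  have hv' : Summable fun k : ℕ => ‖(y ^ (-(k:ℤ) - τ) : ℝ) • v k‖ := by
    simp only [norm_zpow_smul y hy]; exact hv
  have hinner : ∀ n : ℕ,
      (∑ kl ∈ antidiagonal n, ((y ^ (-(kl.1:ℤ) - σ) : ℝ) • u kl.1) * ((y ^ (-(kl.2:ℤ) - τ) : ℝ) • v kl.2))
        = (y ^ (-(n:ℤ) - σ - τ) : ℝ) • ∑ kl ∈ antidiagonal n, u kl.1 * v kl.2 := by
    intro n
    rw [Finset.smul_sum]
    refine Finset.sum_congr rfl fun kl hkl => ?_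
    have hn : kl.1 + kl.2 = n := Finset.HasAntidiagonal.mem_antidiagonal.mp hkl
    rw [smul_mul_smul_comm, ← zpow_add₀ hy.ne']
    congr 2
    omega
  constructor
  · rw [tsum_mul_tsum_eq_tsum_sum_antidiagonal_of_summable_norm hu' hv']
    exact tsum_congr hinner
  · have hsum := summable_norm_sum_mul_antidiagonal_of_summable_norm hu' hv'
    apply hsum.congr
    intro n
    rw [hinner n, norm_zpow_smul y hy]

section ad

variable {A : Type*} [NormedRing A] [NormedAlgebra ℂ A]

local notation "D" => LieAlgebra.ad ℂ A

lemma ad_mul (N x y : A) : D N (x * y) = (D N x) * y + x * (D N y) := by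
  simp only [LieAlgebra.ad_apply, Ring.lie_def]
  noncomm_ring

lemma ad_pow_mul_eq_zero (N : A) :
    ∀ (n : ℕ) (x y : A) (p q : ℕ), p + q ≤ n + 1 →
      ((D N) ^ p) x = 0 → ((D N) ^ q) y = 0 → ((D N) ^ n) (x * y) = 0 := by
  intro n
  induction n with
  | zero =>
    intro x y p q hpq hx hy
    have : p = 0 ∨ q = 0 := by omega
    rcases this with h | h
    · subst h; rw [pow_zero, Module.End.one_apply] at hx
      rw [hx, zero_mul, pow_zero, Module.End.one_apply]
    · subst h; rw [pow_zero, Module.End.one_apply] at hy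
      rw [hy, mul_zero, pow_zero, Module.End.one_apply]
  | succ n ih =>
    intro x y p q hpq hx hy
    rcases Nat.eq_zero_or_pos p with hp | hp
    · subst hp; rw [pow_zero, Module.End.one_apply] at hx
      rw [hx, zero_mul, map_zero]
    rcases Nat.eq_zero_or_pos q with hq | hq
    · subst hq; rw [pow_zero, Module.End.one_apply] at hy
      rw [hy, mul_zero, map_zero]
    obtain ⟨p', rfl⟩ := Nat.exists_eq_succ_of_ne_zero hp.ne'
    obtain ⟨q', rfl⟩ := Nat.exists_eq_succ_of_ne_zero hq.ne'
    rw [pow_succ, Module.End.mul_apply, ad_mul, map_add]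
    have h1 : ((D N) ^ n) ((D N x) * y) = 0 := by
      apply ih (D N x) y p' (q'+1) (by omega) ?_ hy
      rw [← Module.End.mul_apply, ← pow_succ]
      exact hx
    have h2 : ((D N) ^ n) (x * (D N y)) = 0 := by
      apply ih x (D N y) (p'+1) q' (by omega) hx ?_
      rw [← Module.End.mul_apply, ← pow_succ]
      exact hy
    rw [h1, h2, add_zero]

end ad


def shift0 {R : Type*} [Zero R] (P : ℕ → R) : ℕ → R := fun n => Nat.casesOn n 0 P

@[simp] lemma shift0_zero {R : Type*} [Zero R] (P : ℕ → R) : shift0 P 0 = 0 := rfl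
@[simp] lemma shift0_succ {R : Type*} [Zero R] (P : ℕ → R) (n : ℕ) : shift0 P (n+1) = P n := rfl

end ExpKer


open ExpKer Finset Filter Topology in
set_option maxHeartbeats 4000000 in
/-- **Kernel conditions on expansion coefficients** (cf. Corollary 8.32): if
`g⁻¹ g' = Σ_{m≥2} B_m y^{-m}` with `(ad N₀)^m B_m = 0`, and `g` admits the expansions
`g(y) = g(∞)(1 + Σ_{k≥1} g_k y^{-k})`, `g(y)⁻¹ = (1 + Σ_{k≥1} f_k y^{-k}) g(∞)⁻¹`,
then `(ad N₀)^{k+1} g_k = 0` and `(ad N₀)^{k+1} f_k = 0` for all `k ≥ 1`.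
Here `B m`, `gs k`, `fs k` denote `B_{m+2}`, `g_{k+1}`, `f_{k+1}`. -/
theorem expansion_coefficients_in_kernel
    {V : Type*} [NormedAddCommGroup V] [NormedSpace ℂ V] [FiniteDimensional ℂ V]
    (a : ℝ) (ha : 0 < a) (B : ℕ → (V →L[ℂ] V))
    (hB : ∀ y : ℝ, a < y → Summable fun m : ℕ => ‖B m‖ * y ^ (-(m : ℤ) - 2))
    (g : ℝ → (V ≃L[ℂ] V))
    (hg : ∀ y : ℝ, a < y → HasDerivAt (fun t => (g t : V →L[ℂ] V))
      ((g y : V →L[ℂ] V) * ∑' m : ℕ, (y ^ (-(m : ℤ) - 2) : ℝ) • B m) y)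
    (G : V ≃L[ℂ] V) (gs fs : ℕ → (V →L[ℂ] V)) (b : ℝ) (hab : a ≤ b)
    (hexp : ∀ y : ℝ, b < y →
      (Summable fun k : ℕ => ‖gs k‖ * y ^ (-(k : ℤ) - 1)) ∧
      (Summable fun k : ℕ => ‖fs k‖ * y ^ (-(k : ℤ) - 1)) ∧
      (g y : V →L[ℂ] V)
        = (G : V →L[ℂ] V) * (1 + ∑' k : ℕ, (y ^ (-(k : ℤ) - 1) : ℝ) • gs k) ∧
      ((g y).symm : V →L[ℂ] V)
        = (1 + ∑' k : ℕ, (y ^ (-(k : ℤ) - 1) : ℝ) • fs k) * (G.symm : V →L[ℂ] V))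
    (N₀ : V →L[ℂ] V)
    (hN : ∀ m : ℕ, ((LieAlgebra.ad ℂ (V →L[ℂ] V) N₀) ^ (m + 2)) (B m) = 0) :
    ∀ k : ℕ, ((LieAlgebra.ad ℂ (V →L[ℂ] V) N₀) ^ (k + 2)) (gs k) = 0 ∧
      ((LieAlgebra.ad ℂ (V →L[ℂ] V) N₀) ^ (k + 2)) (fs k) = 0 := by
  classical
  haveI : CompleteSpace V := FiniteDimensional.complete ℂ V
  have hb0 : (0:ℝ) < b := lt_of_lt_of_le ha hab
  set P : ℕ → (V →L[ℂ] V) := fun m => ∑ kl ∈ antidiagonal m, fs kl.1 * gs kl.2 with hPdef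
  set Q : ℕ → (V →L[ℂ] V) := fun m => ∑ kl ∈ antidiagonal m, gs kl.1 * B kl.2 with hQdef
  set W : ℕ → (V →L[ℂ] V) := fun m => ((m:ℝ)+1) • gs m + B m + shift0 Q m with hWdef
  set e : ℕ → (V →L[ℂ] V) := fun n => fs n + gs n + shift0 P n with hedef
  set d : ℕ → (V →L[ℂ] V) := fun n => shift0 W n with hddef
  have hGG : ((G.symm : V →L[ℂ] V) * (G : V →L[ℂ] V)) = 1 := by
    ext v; simp [ContinuousLinearMap.mul_apply]
  -- norm of (m+1) • x
  have hnsm : ∀ (m : ℕ) (x : V →L[ℂ] V), ‖((m:ℝ)+1) • x‖ = ((m:ℝ)+1) * ‖x‖ := by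
    intro m x
    have h := norm_smul (α := ℝ) (β := V →L[ℂ] V) ((m:ℝ)+1) x
    rw [Real.norm_eq_abs, abs_of_pos (by positivity : (0:ℝ) < (m:ℝ)+1)] at h
    exact h
  -- the ODE-derived identity
  have hODE : ∀ y : ℝ, b < y →
      (∑' k : ℕ, (((-(k:ℝ)-1)) * y ^ (-(k:ℤ)-2)) • gs k)
        = (1 + ∑' k : ℕ, (y ^ (-(k:ℤ)-1) : ℝ) • gs k)
          * (∑' m : ℕ, (y ^ (-(m:ℤ)-2) : ℝ) • B m) := by
    intro y hy
    have h0y : (0:ℝ) < y := hb0.trans hy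
    have hay : a < y := lt_of_le_of_lt hab hy
    set c : ℝ := (b+y)/2 with hcdef
    have hbc : b < c := by rw [hcdef]; linarith
    have hcy : c < y := by rw [hcdef]; linarith
    have h0c : (0:ℝ) < c := hb0.trans hbc
    set y₂ : ℝ := (b+c)/2 with hy₂def
    have hby₂ : b < y₂ := by rw [hy₂def]; linarith
    have h0y₂ : (0:ℝ) < y₂ := hb0.trans hby₂
    have hy₂c : y₂ < c := by rw [hy₂def]; linarith
    obtain ⟨hgsN, -, -, -⟩ := hexp y hy
    have hgs₂ := (hexp y₂ hby₂).1
    have hu : Summable fun k : ℕ => ((k:ℝ)+1) * (‖gs k‖ * c ^ (-(k:ℤ)-2)) :=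
      summable_deriv_bound h0y₂ hy₂c (fun k => norm_nonneg _) hgs₂
    have hder : ∀ (k:ℕ) (z:ℝ), z ∈ Set.Ioi c →
        HasDerivAt (fun x : ℝ => (x ^ (-(k:ℤ)-1) : ℝ) • gs k)
          ((((-(k:ℝ)-1)) * z ^ (-(k:ℤ)-2)) • gs k) z := by
      intro k z hz
      have hz0 : z ≠ 0 := (h0c.trans hz).ne'
      have h1 := (hasDerivAt_zpow (-(k:ℤ)-1) z (Or.inl hz0)).smul_const (gs k)
      rw [show (-(k:ℤ)-1-1) = -(k:ℤ)-2 by ring] at h1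
      rw [show ((-(k:ℤ)-1 : ℤ) : ℝ) = -(k:ℝ)-1 by push_cast; ring] at h1
      exact h1
    have hbound : ∀ (k:ℕ) (z:ℝ), z ∈ Set.Ioi c →
        ‖(((-(k:ℝ)-1)) * z ^ (-(k:ℤ)-2)) • gs k‖
          ≤ ((k:ℝ)+1) * (‖gs k‖ * c ^ (-(k:ℤ)-2)) := by
      intro k z hz
      have hcz : c < z := hz
      have h0z : (0:ℝ) < z := h0c.trans hcz
      have h2 : ‖(((-(k:ℝ)-1)) * z ^ (-(k:ℤ)-2)) • gs k‖
          = (((k:ℝ)+1) * z ^ (-(k:ℤ)-2)) * ‖gs k‖ := by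
        have h3 := norm_smul (α := ℝ) (β := V →L[ℂ] V)
          ((((-(k:ℝ)-1)) * z ^ (-(k:ℤ)-2))) (gs k)
        rw [Real.norm_eq_abs, abs_mul,
          abs_of_nonpos (by have := Nat.cast_nonneg (α := ℝ) k; linarith : (-(k:ℝ)-1) ≤ 0),
          abs_of_pos (zpow_pos h0z _)] at h3
        rw [h3]
        congr 1
        ring
      rw [h2]
      have hz2 : z ^ (-(k:ℤ)-2) ≤ c ^ (-(k:ℤ)-2) := by
        rw [zp2, zp2]
        exact inv_anti₀ (by positivity) (pow_le_pow_left₀ h0c.le hcz.le (k+2))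
      calc ((k:ℝ)+1) * z ^ (-(k:ℤ)-2) * ‖gs k‖
          ≤ ((k:ℝ)+1) * c ^ (-(k:ℤ)-2) * ‖gs k‖ :=
            mul_le_mul_of_nonneg_right
              (mul_le_mul_of_nonneg_left hz2 (by positivity)) (norm_nonneg _)
        _ = ((k:ℝ)+1) * (‖gs k‖ * c ^ (-(k:ℤ)-2)) := by ring
    have hsum_at : Summable fun k : ℕ => (y ^ (-(k:ℤ)-1) : ℝ) • gs k :=
      summable_smul_of_norm h0y hgsN
    have hDer : HasDerivAt (fun z : ℝ => ∑' k : ℕ, (z ^ (-(k:ℤ)-1) : ℝ) • gs k)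
        (∑' k : ℕ, (((-(k:ℝ)-1)) * y ^ (-(k:ℤ)-2)) • gs k) y :=
      hasDerivAt_tsum_of_isPreconnected hu isOpen_Ioi (convex_Ioi c).isPreconnected
        hder hbound (Set.mem_Ioi.mpr hcy) hsum_at (Set.mem_Ioi.mpr hcy)
    have hDer2 : HasDerivAt (fun t : ℝ => (g t : V →L[ℂ] V))
        ((G : V →L[ℂ] V) * ∑' k : ℕ, (((-(k:ℝ)-1)) * y ^ (-(k:ℤ)-2)) • gs k) y := by
      have h1 := (hDer.const_add (1 : V →L[ℂ] V)).const_mul (G : V →L[ℂ] V)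
      apply h1.congr_of_eventuallyEq
      apply Filter.eventuallyEq_of_mem (isOpen_Ioi.mem_nhds (Set.mem_Ioi.mpr hy))
      intro z hz
      exact (hexp z hz).2.2.1
    have huniq := hDer2.unique (hg y hay)
    rw [(hexp y hy).2.2.1, mul_assoc] at huniq
    have h5 := congrArg (fun x => (G.symm : V →L[ℂ] V) * x) huniq
    simpa only [← mul_assoc, hGG, one_mul] using h5
  -- inverse-derived identity
  have hINV : ∀ y : ℝ, b < y →
      ((∑' k : ℕ, (y ^ (-(k:ℤ)-1) : ℝ) • fs k) + (∑' k : ℕ, (y ^ (-(k:ℤ)-1) : ℝ) • gs k))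
        + (∑' k : ℕ, (y ^ (-(k:ℤ)-1) : ℝ) • fs k) * (∑' k : ℕ, (y ^ (-(k:ℤ)-1) : ℝ) • gs k) = 0 := by
    intro y hy
    have h1 : ((g y).symm : V →L[ℂ] V) * ((g y) : V →L[ℂ] V) = 1 := by
      ext v; simp [ContinuousLinearMap.mul_apply]
    rw [(hexp y hy).2.2.1, (hexp y hy).2.2.2] at h1
    have h2 : (1 + ∑' k : ℕ, (y ^ (-(k:ℤ)-1) : ℝ) • fs k)
        * (1 + ∑' k : ℕ, (y ^ (-(k:ℤ)-1) : ℝ) • gs k) = 1 := by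
      calc (1 + ∑' k : ℕ, (y ^ (-(k:ℤ)-1) : ℝ) • fs k)
            * (1 + ∑' k : ℕ, (y ^ (-(k:ℤ)-1) : ℝ) • gs k)
          = ((1 + ∑' k : ℕ, (y ^ (-(k:ℤ)-1) : ℝ) • fs k) * (G.symm : V →L[ℂ] V))
            * ((G : V →L[ℂ] V) * (1 + ∑' k : ℕ, (y ^ (-(k:ℤ)-1) : ℝ) • gs k)) := by
            rw [mul_assoc, ← mul_assoc (G.symm : V →L[ℂ] V), hGG, one_mul]
        _ = 1 := h1
    have h4 : (1 + ∑' k : ℕ, (y ^ (-(k:ℤ)-1) : ℝ) • fs k)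
        * (1 + ∑' k : ℕ, (y ^ (-(k:ℤ)-1) : ℝ) • gs k)
        = 1 + (((∑' k : ℕ, (y ^ (-(k:ℤ)-1) : ℝ) • fs k) + (∑' k : ℕ, (y ^ (-(k:ℤ)-1) : ℝ) • gs k))
          + (∑' k : ℕ, (y ^ (-(k:ℤ)-1) : ℝ) • fs k) * (∑' k : ℕ, (y ^ (-(k:ℤ)-1) : ℝ) • gs k)) := by
      rw [add_mul, one_mul, mul_add, mul_one]
      abel
    exact add_eq_left.mp (h4.symm.trans h2)
  -- coefficients of the inverse identity vanish
  have he : ∀ n : ℕ, e n = 0 := by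
    intro n
    apply coeff_eq_zero hb0 n e
    · intro y hy
      have h0y : (0:ℝ) < y := hb0.trans hy
      obtain ⟨hgsN, hfsN, -, -⟩ := hexp y hy
      have hcFG := cauchy_product fs gs 1 1 h0y hfsN hgsN
      have hPN2 : Summable fun n : ℕ => ‖P n‖ * y ^ (-(n:ℤ)-2) := by
        apply hcFG.2.congr
        intro n
        rw [show (-(n:ℤ)-1-1) = -(n:ℤ)-2 by ring]
      have hPeN : Summable fun n : ℕ => ‖shift0 P n‖ * y ^ (-(n:ℤ)-1) := by
        apply (_root_.summable_nat_add_iff 1).mp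
        apply hPN2.congr
        intro n
        rw [shift0_succ]
        congr 1
        push_cast; ring
      have hbnd : Summable fun n : ℕ => (‖fs n‖ + ‖gs n‖ + ‖shift0 P n‖) * y ^ (-(n:ℤ)-1) := by
        apply ((hfsN.add hgsN).add hPeN).congr
        intro n
        ring
      apply Summable.of_nonneg_of_le (fun n => by positivity) (fun n => ?_) hbnd
      apply mul_le_mul_of_nonneg_right _ (le_of_lt (zpow_pos h0y _))
      simp only [hedef]
      exact norm_add₃_le
    · intro y hy
      have h0y : (0:ℝ) < y := hb0.trans hy
      obtain ⟨hgsN, hfsN, -, -⟩ := hexp y hy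
      have hsgs : Summable fun k : ℕ => (y ^ (-(k:ℤ)-1) : ℝ) • gs k :=
        summable_smul_of_norm h0y hgsN
      have hsfs : Summable fun k : ℕ => (y ^ (-(k:ℤ)-1) : ℝ) • fs k :=
        summable_smul_of_norm h0y hfsN
      have hcFG := cauchy_product fs gs 1 1 h0y hfsN hgsN
      have hPN2 : Summable fun n : ℕ => ‖P n‖ * y ^ (-(n:ℤ)-2) := by
        apply hcFG.2.congr
        intro n
        rw [show (-(n:ℤ)-1-1) = -(n:ℤ)-2 by ring]
      have hPeN : Summable fun n : ℕ => ‖shift0 P n‖ * y ^ (-(n:ℤ)-1) := by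
        apply (_root_.summable_nat_add_iff 1).mp
        apply hPN2.congr
        intro n
        rw [shift0_succ]
        congr 1
        push_cast; ring
      have hsPe : Summable fun n : ℕ => (y ^ (-(n:ℤ)-1) : ℝ) • shift0 P n :=
        summable_smul_of_norm h0y hPeN
      have hmul1 : (∑' k : ℕ, (y ^ (-(k:ℤ)-1) : ℝ) • fs k) * (∑' k : ℕ, (y ^ (-(k:ℤ)-1) : ℝ) • gs k)
          = ∑' n : ℕ, (y ^ (-(n:ℤ)-2) : ℝ) • P n := by
        rw [hcFG.1]
        apply tsum_congr
        intro n
        congr 1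
        rw [show (-(n:ℤ)-1-1) = -(n:ℤ)-2 by ring]
      have hsplit : ∑' n : ℕ, (y ^ (-(n:ℤ)-1) : ℝ) • shift0 P n
          = ∑' n : ℕ, (y ^ (-(n:ℤ)-2) : ℝ) • P n := by
        rw [Summable.tsum_eq_zero_add hsPe]
        simp only [shift0_zero, smul_zero, zero_add, shift0_succ]
        apply tsum_congr
        intro n
        congr 2
        push_cast; ring
      calc ∑' n : ℕ, (y ^ (-(n:ℤ)-1) : ℝ) • e n
          = ∑' n : ℕ, ((y ^ (-(n:ℤ)-1) : ℝ) • fs n + (y ^ (-(n:ℤ)-1) : ℝ) • gs n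
              + (y ^ (-(n:ℤ)-1) : ℝ) • shift0 P n) := by
            apply tsum_congr
            intro n
            simp only [hedef, smul_add]
        _ = ((∑' k : ℕ, (y ^ (-(k:ℤ)-1) : ℝ) • fs k) + (∑' k : ℕ, (y ^ (-(k:ℤ)-1) : ℝ) • gs k))
              + ∑' n : ℕ, (y ^ (-(n:ℤ)-1) : ℝ) • shift0 P n := by
            rw [Summable.tsum_add (hsfs.add hsgs) hsPe, Summable.tsum_add hsfs hsgs]
        _ = 0 := by
            rw [hsplit, ← hmul1]
            exact hINV y hy
  -- coefficients of the ODE identity vanish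
  have hd : ∀ n : ℕ, d n = 0 := by
    intro n
    apply coeff_eq_zero hb0 n d
    · intro y hy
      have h0y : (0:ℝ) < y := hb0.trans hy
      have hay : a < y := lt_of_le_of_lt hab hy
      obtain ⟨hgsN, -, -, -⟩ := hexp y hy
      have hBN := hB y hay
      set y₂ : ℝ := (b+y)/2 with hy₂def
      have hby₂ : b < y₂ := by rw [hy₂def]; linarith
      have h0y₂ : (0:ℝ) < y₂ := hb0.trans hby₂
      have hy₂y : y₂ < y := by rw [hy₂def]; linarith
      have hgs₂ := (hexp y₂ hby₂).1
      have s1 : Summable fun m : ℕ => ‖((m:ℝ)+1) • gs m‖ * y ^ (-(m:ℤ)-2) := by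
        apply (summable_deriv_bound h0y₂ hy₂y (fun k => norm_nonneg _) hgs₂).congr
        intro m
        rw [hnsm]
        ring
      have hcGB := cauchy_product gs B 1 2 h0y hgsN hBN
      have hQN : Summable fun n : ℕ => ‖Q n‖ * y ^ (-(n:ℤ)-3) := by
        apply hcGB.2.congr
        intro n
        rw [show (-(n:ℤ)-1-2) = -(n:ℤ)-3 by ring]
      have s3 : Summable fun m : ℕ => ‖shift0 Q m‖ * y ^ (-(m:ℤ)-2) := by
        apply (_root_.summable_nat_add_iff 1).mp
        apply hQN.congr
        intro m
        rw [shift0_succ]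
        congr 1
        push_cast; ring
      have hWN : Summable fun m : ℕ => ‖W m‖ * y ^ (-(m:ℤ)-2) := by
        have hbnd : Summable fun m : ℕ =>
            (‖((m:ℝ)+1) • gs m‖ + ‖B m‖ + ‖shift0 Q m‖) * y ^ (-(m:ℤ)-2) := by
          apply ((s1.add hBN).add s3).congr
          intro m
          ring
        apply Summable.of_nonneg_of_le (fun m => by positivity) (fun m => ?_) hbnd
        apply mul_le_mul_of_nonneg_right _ (le_of_lt (zpow_pos h0y _))
        simp only [hWdef]
        exact norm_add₃_le
      apply (_root_.summable_nat_add_iff 1).mp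
      apply hWN.congr
      intro m
      simp only [hddef, shift0_succ]
      congr 1
      push_cast; ring
    · intro y hy
      have h0y : (0:ℝ) < y := hb0.trans hy
      have hay : a < y := lt_of_le_of_lt hab hy
      obtain ⟨hgsN, -, -, -⟩ := hexp y hy
      have hBN := hB y hay
      set y₂ : ℝ := (b+y)/2 with hy₂def
      have hby₂ : b < y₂ := by rw [hy₂def]; linarith
      have h0y₂ : (0:ℝ) < y₂ := hb0.trans hby₂
      have hy₂y : y₂ < y := by rw [hy₂def]; linarith
      have hgs₂ := (hexp y₂ hby₂).1
      have s1 : Summable fun m : ℕ => ‖((m:ℝ)+1) • gs m‖ * y ^ (-(m:ℤ)-2) := by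
        apply (summable_deriv_bound h0y₂ hy₂y (fun k => norm_nonneg _) hgs₂).congr
        intro m
        rw [hnsm]
        ring
      have hcGB := cauchy_product gs B 1 2 h0y hgsN hBN
      have hQN : Summable fun n : ℕ => ‖Q n‖ * y ^ (-(n:ℤ)-3) := by
        apply hcGB.2.congr
        intro n
        rw [show (-(n:ℤ)-1-2) = -(n:ℤ)-3 by ring]
      have s3 : Summable fun m : ℕ => ‖shift0 Q m‖ * y ^ (-(m:ℤ)-2) := by
        apply (_root_.summable_nat_add_iff 1).mp
        apply hQN.congr
        intro m
        rw [shift0_succ]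
        congr 1
        push_cast; ring
      have sv1 : Summable fun m : ℕ => (y ^ (-(m:ℤ)-2) : ℝ) • (((m:ℝ)+1) • gs m) :=
        summable_smul_of_norm2 h0y s1
      have sv2 : Summable fun m : ℕ => (y ^ (-(m:ℤ)-2) : ℝ) • B m :=
        summable_smul_of_norm2 h0y hBN
      have sv3 : Summable fun m : ℕ => (y ^ (-(m:ℤ)-2) : ℝ) • shift0 Q m :=
        summable_smul_of_norm2 h0y s3
      have svW : Summable fun m : ℕ => (y ^ (-(m:ℤ)-2) : ℝ) • W m := by
        apply ((sv1.add sv2).add sv3).congr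
        intro m
        simp only [hWdef, smul_add]
      have svd : Summable fun n : ℕ => (y ^ (-(n:ℤ)-1) : ℝ) • d n := by
        apply Summable.of_norm
        have hnn : ∀ (nn : ℕ) (x : V →L[ℂ] V), ‖(y ^ (-(nn:ℤ)-1) : ℝ) • x‖ = ‖x‖ * y ^ (-(nn:ℤ)-1) := by
          intro nn x
          exact norm_zpow_smul y h0y _ x
        simp only [hnn]
        apply (_root_.summable_nat_add_iff 1).mp
        have hWN : Summable fun m : ℕ => ‖W m‖ * y ^ (-(m:ℤ)-2) := by
          apply Summable.of_norm
          simp only [Real.norm_eq_abs, abs_mul, abs_norm,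
            abs_of_pos (zpow_pos h0y _)]
          have hbnd : Summable fun m : ℕ =>
              (‖((m:ℝ)+1) • gs m‖ + ‖B m‖ + ‖shift0 Q m‖) * y ^ (-(m:ℤ)-2) := by
            apply ((s1.add hBN).add s3).congr
            intro m
            ring
          apply Summable.of_nonneg_of_le (fun m => by positivity) (fun m => ?_) hbnd
          apply mul_le_mul_of_nonneg_right _ (le_of_lt (zpow_pos h0y _))
          simp only [hWdef]
          exact norm_add₃_le
        apply hWN.congr
        intro m
        simp only [hddef, shift0_succ]
        congr 1
        push_cast; ring
      calc ∑' n : ℕ, (y ^ (-(n:ℤ)-1) : ℝ) • d n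
          = (y ^ (-((0:ℕ):ℤ)-1) : ℝ) • d 0
            + ∑' n : ℕ, (y ^ (-((n+1:ℕ):ℤ)-1) : ℝ) • d (n+1) := Summable.tsum_eq_zero_add svd
        _ = ∑' n : ℕ, (y ^ (-(n:ℤ)-2) : ℝ) • W n := by
            simp only [hddef, shift0_zero, smul_zero, zero_add, shift0_succ]
            apply tsum_congr
            intro n
            congr 2
            push_cast; ring
        _ = (∑' m : ℕ, (y ^ (-(m:ℤ)-2) : ℝ) • (((m:ℝ)+1) • gs m))
              + (∑' m : ℕ, (y ^ (-(m:ℤ)-2) : ℝ) • B m)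
              + (∑' m : ℕ, (y ^ (-(m:ℤ)-2) : ℝ) • shift0 Q m) := by
            have h1 : ∀ n : ℕ, (y ^ (-(n:ℤ)-2) : ℝ) • W n
                = (y ^ (-(n:ℤ)-2) : ℝ) • (((n:ℝ)+1) • gs n)
                  + (y ^ (-(n:ℤ)-2) : ℝ) • B n
                  + (y ^ (-(n:ℤ)-2) : ℝ) • shift0 Q n := by
              intro n
              simp only [hWdef, smul_add]
            rw [tsum_congr h1, Summable.tsum_add (sv1.add sv2) sv3, Summable.tsum_add sv1 sv2]
        _ = 0 := by
            have hneg : (∑' m : ℕ, (y ^ (-(m:ℤ)-2) : ℝ) • (((m:ℝ)+1) • gs m))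
                = - ∑' m : ℕ, (((-(m:ℝ)-1)) * y ^ (-(m:ℤ)-2)) • gs m := by
              rw [← tsum_neg]
              apply tsum_congr
              intro m
              rw [smul_smul, ← neg_smul]
              congr 1
              ring
            have hQsplit : (∑' m : ℕ, (y ^ (-(m:ℤ)-2) : ℝ) • shift0 Q m)
                = (∑' k : ℕ, (y ^ (-(k:ℤ)-1) : ℝ) • gs k)
                  * (∑' m : ℕ, (y ^ (-(m:ℤ)-2) : ℝ) • B m) := by
              rw [Summable.tsum_eq_zero_add sv3]
              simp only [shift0_zero, smul_zero, zero_add, shift0_succ]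
              rw [hcGB.1]
              apply tsum_congr
              intro n
              congr 2
              push_cast; ring
            rw [hneg, hQsplit, hODE y hy, add_mul, one_mul]
            abel
  -- final induction
  intro k
  induction k using Nat.strong_induction_on with
  | _ k ih =>
    have hgsk : ((LieAlgebra.ad ℂ (V →L[ℂ] V) N₀) ^ (k + 2)) (gs k) = 0 := by
      have hrel : ((k:ℝ)+1) • gs k + B k + shift0 Q k = 0 := by
        have h1 := hd (k+1)
        simp only [hddef, shift0_succ, hWdef] at h1
        exact h1
      have hQ0 : ((LieAlgebra.ad ℂ (V →L[ℂ] V) N₀) ^ (k + 2)) (shift0 Q k) = 0 := by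
        cases k with
        | zero => rw [shift0_zero]; exact map_zero _
        | succ m =>
          rw [shift0_succ]
          simp only [hQdef]
          rw [map_sum]
          apply Finset.sum_eq_zero
          intro kl hkl
          have hm : kl.1 + kl.2 = m := Finset.HasAntidiagonal.mem_antidiagonal.mp hkl
          exact ad_pow_mul_eq_zero N₀ (m+1+2) (gs kl.1) (B kl.2) (kl.1+2) (kl.2+2)
            (by omega) ((ih kl.1 (by omega)).1) (hN kl.2)
      have hsm : ((LieAlgebra.ad ℂ (V →L[ℂ] V) N₀) ^ (k + 2)) (((k:ℝ)+1) • gs k) = 0 := by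
        have h2 : ((k:ℝ)+1) • gs k = -(B k + shift0 Q k) := by
          apply eq_neg_of_add_eq_zero_left
          rw [← add_assoc]
          exact hrel
        rw [h2, map_neg, map_add, hN k, hQ0, add_zero, neg_zero]
      rw [LinearMap.map_smul_of_tower] at hsm
      exact (smul_eq_zero.mp hsm).resolve_left (by positivity)
    refine ⟨hgsk, ?_⟩
    have hrel : fs k + gs k + shift0 P k = 0 := by
      have h1 := he k
      simp only [hedef] at h1
      exact h1
    have hP0 : ((LieAlgebra.ad ℂ (V →L[ℂ] V) N₀) ^ (k + 2)) (shift0 P k) = 0 := by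
      cases k with
      | zero => rw [shift0_zero]; exact map_zero _
      | succ m =>
        rw [shift0_succ]
        simp only [hPdef]
        rw [map_sum]
        apply Finset.sum_eq_zero
        intro kl hkl
        have hm : kl.1 + kl.2 = m := Finset.HasAntidiagonal.mem_antidiagonal.mp hkl
        exact ad_pow_mul_eq_zero N₀ (m+1+2) (fs kl.1) (gs kl.2) (kl.1+2) (kl.2+2)
          (by omega) ((ih kl.1 (by omega)).2) ((ih kl.2 (by omega)).1)
    have h2 : fs k = -(gs k + shift0 P k) := by
      apply eq_neg_of_add_eq_zero_left
      rw [← add_assoc]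
      exact hrel
    rw [h2, map_neg, map_add, hgsk, hP0, add_zero, neg_zero]
end
end

section
/- Let V be a finite-dimensional complex normed vector space, N_0 ∈ End(V) nilpotent, and (g_k)_{k≥1} a sequence in End(V) with Σ_{k≥1} ‖g_k‖ < ∞ and (ad N_0)^{k+1} g_k = 0 for every k ≥ 1. Then lim_{y→∞} e^{−iyN_0}·(1 + Σ_{k≥1} g_k y^{−k})·e^{iyN_0} = 1 + Σ_{k≥1} ((−i)^k / k!)·(ad N_0)^k g_k, where the series on the right converges absolutely. -/
noncomputable section

attribute [local instance 100] LieRing.ofAssociativeRing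

open NormedSpace Filter Topology

section Aux
variable {A : Type*} [NormedRing A] [NormedAlgebra ℂ A] [CompleteSpace A]

lemma exp_clm_apply (S : A →L[ℂ] A) (a : A) :
    NormedSpace.exp S a = ∑' n : ℕ, ((n.factorial : ℂ))⁻¹ • (S ^ n) a := by
  rw [NormedSpace.exp_eq_tsum ℂ]
  refine ((ContinuousLinearMap.apply ℂ A a).map_tsum
    (NormedSpace.expSeries_summable' (𝕂 := ℂ) S)).trans ?_
  simp [ContinuousLinearMap.apply_apply]

lemma pow_smul_mulLeft_apply (x : A) (c : ℂ) (a : A) (n : ℕ) :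
    ((c • ContinuousLinearMap.mul ℂ A x) ^ n) a = c ^ n • (x ^ n * a) := by
  induction n generalizing a with
  | zero => simp
  | succ n ih =>
      rw [pow_succ, ContinuousLinearMap.mul_apply]
      simp only [ContinuousLinearMap.smul_apply, ContinuousLinearMap.mul_apply']
      rw [map_smul, ih, smul_smul, ← pow_succ', ← mul_assoc, ← pow_succ]

lemma pow_smul_mulRight_apply (x : A) (c : ℂ) (a : A) (n : ℕ) :
    ((c • (ContinuousLinearMap.mul ℂ A).flip x) ^ n) a = c ^ n • (a * x ^ n) := by
  induction n generalizing a with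
  | zero => simp
  | succ n ih =>
      rw [pow_succ, ContinuousLinearMap.mul_apply]
      simp only [ContinuousLinearMap.smul_apply, ContinuousLinearMap.flip_apply,
        ContinuousLinearMap.mul_apply']
      rw [map_smul, ih, smul_smul, ← pow_succ', mul_assoc, ← pow_succ']

lemma exp_mulLeft_apply (x : A) (c : ℂ) (a : A) :
    NormedSpace.exp (c • ContinuousLinearMap.mul ℂ A x) a
      = NormedSpace.exp (c • x) * a := by
  rw [exp_clm_apply, NormedSpace.exp_eq_tsum ℂ,
    ← Summable.tsum_mul_right a (NormedSpace.expSeries_summable' (𝕂 := ℂ) (c • x))]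
  congr 1
  ext n
  rw [pow_smul_mulLeft_apply, smul_pow, smul_mul_assoc, smul_mul_assoc]

lemma exp_mulRight_apply (x : A) (c : ℂ) (a : A) :
    NormedSpace.exp (c • (ContinuousLinearMap.mul ℂ A).flip x) a
      = a * NormedSpace.exp (c • x) := by
  rw [exp_clm_apply, NormedSpace.exp_eq_tsum ℂ,
    ← Summable.tsum_mul_left a (NormedSpace.expSeries_summable' (𝕂 := ℂ) (c • x))]
  congr 1
  ext n
  rw [pow_smul_mulRight_apply, smul_pow, mul_smul_comm, mul_smul_comm]

end Aux

section Conj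
variable {V : Type*} [NormedAddCommGroup V] [NormedSpace ℂ V] [FiniteDimensional ℂ V]

lemma adpow_eq (N₀ : V →L[ℂ] V) :
    ∀ (n : ℕ) (b : V →L[ℂ] V),
      (((ContinuousLinearMap.mul ℂ (V →L[ℂ] V) N₀)
        - (ContinuousLinearMap.mul ℂ (V →L[ℂ] V)).flip N₀) ^ n) b
        = ((LieAlgebra.ad ℂ (V →L[ℂ] V) N₀) ^ n) b := by
  intro n
  induction n with
  | zero => intro b; simp
  | succ n ih =>
      intro b
      rw [pow_succ', pow_succ', ContinuousLinearMap.mul_apply, Module.End.mul_apply, ih]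
      simp [LieAlgebra.ad_apply, Ring.lie_def]

set_option maxHeartbeats 1000000 in
set_option synthInstance.maxHeartbeats 400000 in
lemma conj_exp_eq (N₀ a : V →L[ℂ] V) (m : ℕ)
    (ha : ((LieAlgebra.ad ℂ (V →L[ℂ] V) N₀) ^ m) a = 0) (c : ℂ) :
    NormedSpace.exp ((-c) • N₀) * a * NormedSpace.exp (c • N₀)
      = ∑ n ∈ Finset.range m, ((-c) ^ n * ((n.factorial : ℂ))⁻¹) •
          ((LieAlgebra.ad ℂ (V →L[ℂ] V) N₀) ^ n) a := by
  have : CompleteSpace V := FiniteDimensional.complete ℂ V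
  set L := ContinuousLinearMap.mul ℂ (V →L[ℂ] V) N₀ with hL
  set R := (ContinuousLinearMap.mul ℂ (V →L[ℂ] V)).flip N₀ with hR
  have hLR : Commute L R := by
    ext b
    simp [hL, hR, ContinuousLinearMap.mul_apply, mul_assoc]
  have key1 : NormedSpace.exp ((-c) • (L - R)) a
      = NormedSpace.exp ((-c) • N₀) * a * NormedSpace.exp (c • N₀) := by
    have hsplit : (-c) • (L - R) = (-c) • L + c • R := by
      rw [smul_sub, sub_eq_add_neg, ← neg_smul, neg_neg]
    have hc : Commute ((-c) • L) (c • R) := (hLR.smul_left (-c)).smul_right c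
    let +nondep : NormedAlgebra ℚ ((V →L[ℂ] V) →L[ℂ] (V →L[ℂ] V)) := .restrictScalars ℚ ℂ _
    rw [hsplit, NormedSpace.exp_add_of_commute (𝔸 := (V →L[ℂ] V) →L[ℂ] (V →L[ℂ] V)) hc,
      ContinuousLinearMap.mul_apply, hR, exp_mulRight_apply, hL, exp_mulLeft_apply,
      mul_assoc]
  have key2 : NormedSpace.exp ((-c) • (L - R)) a
      = ∑ n ∈ Finset.range m, ((-c) ^ n * ((n.factorial : ℂ))⁻¹) •
          ((LieAlgebra.ad ℂ (V →L[ℂ] V) N₀) ^ n) a := by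
    rw [exp_clm_apply, tsum_eq_sum (s := Finset.range m) ?_]
    · refine Finset.sum_congr rfl fun n _ => ?_
      rw [smul_pow, ContinuousLinearMap.smul_apply, adpow_eq, smul_smul, mul_comm]
    · intro n hn
      rw [Finset.mem_range, not_lt] at hn
      have hzero : ((LieAlgebra.ad ℂ (V →L[ℂ] V) N₀) ^ n) a = 0 := by
        obtain ⟨d, rfl⟩ := Nat.exists_eq_add_of_le hn
        rw [add_comm m d, pow_add, Module.End.mul_apply, ha, map_zero]
      rw [smul_pow, ContinuousLinearMap.smul_apply, adpow_eq, hzero, smul_zero, smul_zero]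
  rw [← key1, key2]

end Conj

set_option maxHeartbeats 2000000 in
set_option synthInstance.maxHeartbeats 400000 in
/-- **Limit of `e^{-iyN₀} (1 + Σ g_k y^{-k}) e^{iyN₀}` as `y → ∞`** (cf. (4.19)):
if `N₀` is nilpotent, `Σ ‖g_k‖ < ∞` and `(ad N₀)^{k+1} g_k = 0`, then the limit is
`1 + Σ_{k≥1} ((-i)^k / k!) (ad N₀)^k g_k`, with the right-hand series absolutely
convergent.  Here `gs k` denotes `g_{k+1}`. -/
theorem conjugated_expansion_limit
    {V : Type*} [NormedAddCommGroup V] [NormedSpace ℂ V] [FiniteDimensional ℂ V]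
    (N₀ : V →L[ℂ] V) (hN : IsNilpotent N₀)
    (gs : ℕ → (V →L[ℂ] V))
    (hsum : Summable fun k : ℕ => ‖gs k‖)
    (hker : ∀ k : ℕ, ((LieAlgebra.ad ℂ (V →L[ℂ] V) N₀) ^ (k + 2)) (gs k) = 0) :
    (Summable fun k : ℕ =>
      ‖(((-Complex.I) ^ (k + 1)) / ((k + 1).factorial : ℂ)) •
        ((LieAlgebra.ad ℂ (V →L[ℂ] V) N₀) ^ (k + 1)) (gs k)‖) ∧
    Filter.Tendsto
      (fun y : ℝ =>
        NormedSpace.exp (((-Complex.I) * (y : ℂ)) • N₀) *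
          ((1 : V →L[ℂ] V) + ∑' k : ℕ, (y ^ (-(k : ℤ) - 1) : ℝ) • gs k) *
          NormedSpace.exp ((Complex.I * (y : ℂ)) • N₀))
      Filter.atTop
      (nhds ((1 : V →L[ℂ] V) + ∑' k : ℕ,
        (((-Complex.I) ^ (k + 1)) / ((k + 1).factorial : ℂ)) •
          ((LieAlgebra.ad ℂ (V →L[ℂ] V) N₀) ^ (k + 1)) (gs k))) := by
  have : CompleteSpace V := FiniteDimensional.complete ℂ V
  -- operator norm control for powers of `ad N₀`
  set L := ContinuousLinearMap.mul ℂ (V →L[ℂ] V) N₀ with hL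
  set R := (ContinuousLinearMap.mul ℂ (V →L[ℂ] V)).flip N₀ with hR
  set C := ‖L - R‖ with hC
  have hC0 : (0:ℝ) ≤ C := norm_nonneg _
  have hadnorm : ∀ (n : ℕ) (b : V →L[ℂ] V),
      ‖((LieAlgebra.ad ℂ (V →L[ℂ] V) N₀) ^ n) b‖ ≤ C ^ n * ‖b‖ := by
    intro n b
    rw [← adpow_eq]
    induction n generalizing b with
    | zero => simp
    | succ n ih =>
        rw [pow_succ', ContinuousLinearMap.mul_apply]
        calc ‖(L - R) (((L - R) ^ n) b)‖ ≤ C * ‖((L - R) ^ n) b‖ := (L - R).le_opNorm _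
          _ ≤ C * (C ^ n * ‖b‖) := mul_le_mul_of_nonneg_left (ih b) hC0
          _ = C ^ (n + 1) * ‖b‖ := by rw [pow_succ']; ring
  set M := ∑' n : ℕ, C ^ n / n.factorial with hM
  have hMsum : Summable (fun n : ℕ => C ^ n / n.factorial) := Real.summable_pow_div_factorial C
  have hMle : ∀ n : ℕ, C ^ n / n.factorial ≤ M :=
    fun n => hMsum.le_tsum n (fun m _ => by positivity)
  -- the limit terms
  set g : ℕ → (V →L[ℂ] V) := fun k =>
    (((-Complex.I) ^ (k + 1)) / ((k + 1).factorial : ℂ)) •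
      ((LieAlgebra.ad ℂ (V →L[ℂ] V) N₀) ^ (k + 1)) (gs k) with hg
  have hgnorm : ∀ k : ℕ, ‖g k‖ ≤ M * ‖gs k‖ := by
    intro k
    rw [hg]
    simp only []
    rw [norm_smul (((-Complex.I) ^ (k + 1)) / (((k + 1).factorial : ℂ)))
      (((LieAlgebra.ad ℂ (V →L[ℂ] V) N₀) ^ (k + 1)) (gs k))]
    have h1 : ‖((-Complex.I) ^ (k + 1)) / (((k + 1).factorial : ℂ))‖
        = (((k + 1).factorial : ℝ))⁻¹ := by
      simp [norm_div]
    rw [h1]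
    calc (((k + 1).factorial : ℝ))⁻¹ * ‖((LieAlgebra.ad ℂ (V →L[ℂ] V) N₀) ^ (k + 1)) (gs k)‖
        ≤ (((k + 1).factorial : ℝ))⁻¹ * (C ^ (k + 1) * ‖gs k‖) :=
          mul_le_mul_of_nonneg_left (hadnorm _ _) (by positivity)
      _ = (C ^ (k + 1) / (k + 1).factorial) * ‖gs k‖ := by ring
      _ ≤ M * ‖gs k‖ := mul_le_mul_of_nonneg_right (hMle _) (norm_nonneg _)
  have hsum1 : Summable fun k : ℕ => ‖g k‖ :=
    Summable.of_nonneg_of_le (fun k => norm_nonneg _) hgnorm (hsum.mul_left M)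
  refine ⟨hsum1, ?_⟩
  -- the family of functions
  set f : ℝ → ℕ → (V →L[ℂ] V) := fun y k =>
    (y ^ (-(k : ℤ) - 1) : ℝ) •
      (NormedSpace.exp (((-Complex.I) * (y : ℂ)) • N₀) * gs k *
        NormedSpace.exp ((Complex.I * (y : ℂ)) • N₀)) with hf
  have hconj : ∀ (y : ℝ) (k : ℕ),
      NormedSpace.exp (((-Complex.I) * (y : ℂ)) • N₀) * gs k *
        NormedSpace.exp ((Complex.I * (y : ℂ)) • N₀)
      = ∑ n ∈ Finset.range (k + 2),
          ((-(Complex.I * (y : ℂ))) ^ n * ((n.factorial : ℂ))⁻¹) •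
            ((LieAlgebra.ad ℂ (V →L[ℂ] V) N₀) ^ n) (gs k) := by
    intro y k
    rw [neg_mul]
    exact conj_exp_eq N₀ (gs k) (k + 2) (hker k) (Complex.I * (y : ℂ))
  -- pointwise limits
  have h_ab : ∀ k : ℕ, Filter.Tendsto (fun y => f y k) Filter.atTop (nhds (g k)) := by
    intro k
    set w : ℕ → (V →L[ℂ] V) := fun n =>
      ((-Complex.I) ^ n * ((n.factorial : ℂ))⁻¹) •
        ((LieAlgebra.ad ℂ (V →L[ℂ] V) N₀) ^ n) (gs k) with hw
    have hev : (fun y => f y k) =ᶠ[Filter.atTop] fun y =>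
        ∑ n ∈ Finset.range (k + 2), (y ^ ((n : ℤ) - (k : ℤ) - 1) : ℝ) • w n := by
      filter_upwards [Filter.eventually_ge_atTop 1] with y hy
      have hy0 : (0:ℝ) < y := lt_of_lt_of_le one_pos hy
      rw [hf]
      simp only []
      rw [hconj y k, Finset.smul_sum]
      refine Finset.sum_congr rfl fun n _ => ?_
      have h1 : ((-(Complex.I * (y : ℂ))) ^ n * ((n.factorial : ℂ))⁻¹) •
          ((LieAlgebra.ad ℂ (V →L[ℂ] V) N₀) ^ n) (gs k)
          = ((y ^ (n : ℕ) : ℝ)) • w n := by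
        rw [hw]
        simp only []
        rw [← Complex.coe_smul, smul_smul]
        congr 1
        push_cast
        ring
      rw [h1, smul_smul]
      congr 1
      rw [← zpow_natCast y n, ← zpow_add₀ (ne_of_gt hy0)]
      congr 1
      ring
    rw [Filter.tendsto_congr' hev]
    have hsum_w : ∑ n ∈ Finset.range (k + 2),
        (if n = k + 1 then (1:ℝ) else 0) • w n = g k := by
      have hsplit : ∀ n ∈ Finset.range (k + 2),
          (if n = k + 1 then (1:ℝ) else 0) • w n = if n = k + 1 then w n else 0 := by
        intro n _
        split <;> simp
      rw [Finset.sum_congr rfl hsplit, Finset.sum_ite_eq' (Finset.range (k + 2)) (k + 1) w,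
        if_pos (Finset.mem_range.mpr (by omega))]
      rw [hw, hg]
      simp only []
      rw [div_eq_mul_inv]
    rw [← hsum_w]
    apply tendsto_finset_sum
    intro n hn
    rcases eq_or_ne n (k + 1) with h | h
    · subst h
      have he : ((k + 1 : ℕ) : ℤ) - (k : ℤ) - 1 = 0 := by push_cast; ring
      simp only [he, zpow_zero, one_smul, eq_self_iff_true, if_true]
      exact tendsto_const_nhds
    · have hn' : n < k + 2 := Finset.mem_range.mp hn
      have hlt : ((n : ℤ) - (k : ℤ) - 1) < 0 := by omega
      simp only [if_neg h, zero_smul]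
      have h0 : Filter.Tendsto (fun y : ℝ => y ^ ((n : ℤ) - (k : ℤ) - 1))
          Filter.atTop (nhds 0) := tendsto_zpow_atTop_zero hlt
      have h2 : Filter.Tendsto (fun y : ℝ => (y ^ ((n : ℤ) - (k : ℤ) - 1)) • w n)
          Filter.atTop (nhds ((0:ℝ) • w n)) := h0.smul_const (w n)
      rw [zero_smul] at h2
      exact h2
  -- uniform bound on `[1, ∞)`
  have h_bound : ∀ᶠ y in Filter.atTop, ∀ k : ℕ, ‖f y k‖ ≤ M * ‖gs k‖ := by
    filter_upwards [Filter.eventually_ge_atTop 1] with y hy k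
    have hy0 : (0:ℝ) < y := lt_of_lt_of_le one_pos hy
    rw [hf]
    simp only []
    rw [norm_smul (y ^ (-(k : ℤ) - 1) : ℝ)
      (NormedSpace.exp (((-Complex.I) * (y : ℂ)) • N₀) * gs k *
        NormedSpace.exp ((Complex.I * (y : ℂ)) • N₀)),
      hconj y k, Real.norm_eq_abs, abs_of_nonneg (zpow_nonneg hy0.le _)]
    have hterm : ∀ n ∈ Finset.range (k + 2),
        y ^ (-(k : ℤ) - 1) * ‖((-(Complex.I * (y : ℂ))) ^ n * ((n.factorial : ℂ))⁻¹) •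
          ((LieAlgebra.ad ℂ (V →L[ℂ] V) N₀) ^ n) (gs k)‖
        ≤ (C ^ n / n.factorial) * ‖gs k‖ := by
      intro n hn
      have hn' : n ≤ k + 1 := by
        have := Finset.mem_range.mp hn; omega
      have hnorm_c : ‖(-(Complex.I * (y : ℂ))) ^ n * ((n.factorial : ℂ))⁻¹‖
          = y ^ (n:ℕ) * ((n.factorial : ℝ))⁻¹ := by
        rw [norm_mul, norm_pow, norm_neg, norm_inv]
        simp [Complex.norm_natCast, abs_of_pos hy0]
      have hyp : y ^ (-(k : ℤ) - 1) * y ^ (n:ℕ) ≤ 1 := by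
        rw [← zpow_natCast y n, ← zpow_add₀ (ne_of_gt hy0)]
        exact zpow_le_one_of_nonpos₀ hy (by omega)
      rw [norm_smul ((-(Complex.I * (y : ℂ))) ^ n * ((n.factorial : ℂ))⁻¹)
        (((LieAlgebra.ad ℂ (V →L[ℂ] V) N₀) ^ n) (gs k)), hnorm_c]
      calc y ^ (-(k : ℤ) - 1) * (y ^ (n:ℕ) * ((n.factorial : ℝ))⁻¹ *
            ‖((LieAlgebra.ad ℂ (V →L[ℂ] V) N₀) ^ n) (gs k)‖)
          = (y ^ (-(k : ℤ) - 1) * y ^ (n:ℕ)) * (((n.factorial : ℝ))⁻¹ *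
            ‖((LieAlgebra.ad ℂ (V →L[ℂ] V) N₀) ^ n) (gs k)‖) := by ring
        _ ≤ 1 * (((n.factorial : ℝ))⁻¹ *
            ‖((LieAlgebra.ad ℂ (V →L[ℂ] V) N₀) ^ n) (gs k)‖) :=
            mul_le_mul_of_nonneg_right hyp (by positivity)
        _ = ((n.factorial : ℝ))⁻¹ *
            ‖((LieAlgebra.ad ℂ (V →L[ℂ] V) N₀) ^ n) (gs k)‖ := one_mul _
        _ ≤ ((n.factorial : ℝ))⁻¹ * (C ^ n * ‖gs k‖) :=
            mul_le_mul_of_nonneg_left (hadnorm n (gs k)) (by positivity)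
        _ = (C ^ n / n.factorial) * ‖gs k‖ := by ring
    calc y ^ (-(k : ℤ) - 1) * ‖∑ n ∈ Finset.range (k + 2),
            ((-(Complex.I * (y : ℂ))) ^ n * ((n.factorial : ℂ))⁻¹) •
              ((LieAlgebra.ad ℂ (V →L[ℂ] V) N₀) ^ n) (gs k)‖
        ≤ y ^ (-(k : ℤ) - 1) * ∑ n ∈ Finset.range (k + 2),
            ‖((-(Complex.I * (y : ℂ))) ^ n * ((n.factorial : ℂ))⁻¹) •
              ((LieAlgebra.ad ℂ (V →L[ℂ] V) N₀) ^ n) (gs k)‖ :=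
          mul_le_mul_of_nonneg_left (norm_sum_le _ _) (zpow_nonneg hy0.le _)
      _ = ∑ n ∈ Finset.range (k + 2), y ^ (-(k : ℤ) - 1) *
            ‖((-(Complex.I * (y : ℂ))) ^ n * ((n.factorial : ℂ))⁻¹) •
              ((LieAlgebra.ad ℂ (V →L[ℂ] V) N₀) ^ n) (gs k)‖ := Finset.mul_sum _ _ _
      _ ≤ ∑ n ∈ Finset.range (k + 2), (C ^ n / n.factorial) * ‖gs k‖ :=
          Finset.sum_le_sum hterm
      _ = (∑ n ∈ Finset.range (k + 2), C ^ n / n.factorial) * ‖gs k‖ :=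
          (Finset.sum_mul _ _ _).symm
      _ ≤ M * ‖gs k‖ :=
          mul_le_mul_of_nonneg_right
            (hMsum.sum_le_tsum (Finset.range (k + 2)) (fun n _ => by positivity))
            (norm_nonneg _)
  -- the main function agrees with `1 + ∑' f y k` eventually
  have hev : (fun y : ℝ =>
        NormedSpace.exp (((-Complex.I) * (y : ℂ)) • N₀) *
          ((1 : V →L[ℂ] V) + ∑' k : ℕ, (y ^ (-(k : ℤ) - 1) : ℝ) • gs k) *
          NormedSpace.exp ((Complex.I * (y : ℂ)) • N₀))
      =ᶠ[Filter.atTop] fun y => (1 : V →L[ℂ] V) + ∑' k : ℕ, f y k := by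
    filter_upwards [Filter.eventually_ge_atTop 1] with y hy
    have hy0 : (0:ℝ) < y := lt_of_lt_of_le one_pos hy
    have hs : Summable fun k : ℕ => (y ^ (-(k : ℤ) - 1) : ℝ) • gs k := by
      apply Summable.of_norm_bounded hsum
      intro k
      rw [norm_smul (y ^ (-(k : ℤ) - 1) : ℝ) (gs k), Real.norm_eq_abs,
        abs_of_nonneg (zpow_nonneg hy0.le _)]
      calc y ^ (-(k : ℤ) - 1) * ‖gs k‖ ≤ 1 * ‖gs k‖ :=
            mul_le_mul_of_nonneg_right (zpow_le_one_of_nonpos₀ hy (by omega)) (norm_nonneg _)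
        _ = ‖gs k‖ := one_mul _
    have hEF : NormedSpace.exp (((-Complex.I) * (y : ℂ)) • N₀) *
        NormedSpace.exp ((Complex.I * (y : ℂ)) • N₀) = 1 := by
      have hcomm : Commute (((-Complex.I) * (y : ℂ)) • N₀) ((Complex.I * (y : ℂ)) • N₀) :=
        ((Commute.refl N₀).smul_left _).smul_right _
      let +nondep : NormedAlgebra ℚ (V →L[ℂ] V) := .restrictScalars ℚ ℂ _
      rw [← NormedSpace.exp_add_of_commute hcomm, neg_mul, ← add_smul, neg_add_cancel,
        zero_smul, NormedSpace.exp_zero]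
    rw [mul_add, mul_one, add_mul, hEF]
    congr 1
    rw [← hs.tsum_mul_left, ← (hs.mul_left _).tsum_mul_right]
    exact tsum_congr fun k => by rw [mul_smul_comm, smul_mul_assoc]
  refine Filter.Tendsto.congr' hev.symm ?_
  exact tendsto_const_nhds.add
    (tendsto_tsum_of_dominated_convergence (hsum.mul_left M) h_ab h_bound)
end
end

section
/- Let V be a finite-dimensional complex vector space and W an increasing filtration 0 = W_{−3} ⊆ W_{−2} ⊆ W_{−1} ⊆ W_0 = V. Let Y be a grading of W, and let N ∈ End(V) decompose as N = N_0 + N_{−2} where [Y, N_0] = 0, [Y, N_{−2}] = −2·N_{−2}, and N_0 vanishes on E_0(Y) and on E_{−2}(Y). If Y' is any grading of W such that [Y', N](W_j) ⊆ W_{j−2} for all j, then [Y', N] = −2·N_{−2}. -/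
noncomputable section

/-- **`N_{-2}` is computable from any grading** (cf. (5.16)–(5.18)): let
`0 = W_{-3} ⊆ W_{-2} ⊆ W_{-1} ⊆ W_0 = V`, let `Y` be a grading of `W`, and
`N = N₀ + N_{-2}` with `[Y, N₀] = 0`, `[Y, N_{-2}] = -2 N_{-2}` and `N₀` vanishing on
`E₀(Y)` and `E_{-2}(Y)`.  If `Y'` is any grading of `W` with `[Y', N](W_j) ⊆ W_{j-2}`
for all `j`, then `[Y', N] = -2 N_{-2}`. -/
theorem bracket_with_grading_eq_neg_two_Nminus2
    {V : Type*} [AddCommGroup V] [Module ℂ V] [FiniteDimensional ℂ V]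
    (W : ℤ → Submodule ℂ V) (hmono : Monotone W)
    (hbot : W (-3) = ⊥) (htop : W 0 = ⊤)
    (Y : Module.End ℂ V)
    (hY : ∀ k : ℤ, Disjoint (W (k - 1)) (Module.End.eigenspace Y (k : ℂ)) ∧
      W k = W (k - 1) ⊔ Module.End.eigenspace Y (k : ℂ))
    (N N₀ N₂ : Module.End ℂ V) (hN : N = N₀ + N₂)
    (hYN₀ : ⁅Y, N₀⁆ = 0) (hYN₂ : ⁅Y, N₂⁆ = (-2 : ℂ) • N₂)
    (hvan₀ : ∀ v ∈ Module.End.eigenspace Y (0 : ℂ), N₀ v = 0)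
    (hvan₂ : ∀ v ∈ Module.End.eigenspace Y (-2 : ℂ), N₀ v = 0)
    (Y' : Module.End ℂ V)
    (hY' : ∀ k : ℤ, Disjoint (W (k - 1)) (Module.End.eigenspace Y' (k : ℂ)) ∧
      W k = W (k - 1) ⊔ Module.End.eigenspace Y' (k : ℂ))
    (hbr : ∀ j : ℤ, ∀ v ∈ W j, ⁅Y', N⁆ v ∈ W (j - 2)) :
    ⁅Y', N⁆ = (-2 : ℂ) • N₂ := by
  classical
  obtain ⟨hd0, he0⟩ := hY 0
  obtain ⟨hd1, he1⟩ := hY (-1)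
  obtain ⟨hd2, he2⟩ := hY (-2)
  obtain ⟨hd3, he3⟩ := hY (-3)
  obtain ⟨hd4, he4⟩ := hY (-4)
  obtain ⟨hd0', he0'⟩ := hY' 0
  obtain ⟨hd1', he1'⟩ := hY' (-1)
  obtain ⟨hd2', he2'⟩ := hY' (-2)
  norm_num at hd0 he0 hd1 he1 hd2 he2 hd3 he3 hd4 he4 hd0' he0' hd1' he1' hd2' he2'
  have hW4 : W (-4) = ⊥ := le_bot_iff.mp (hbot ▸ hmono (by norm_num))
  have hW5 : W (-5) = ⊥ := le_bot_iff.mp (hbot ▸ hmono (by norm_num))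
  -- trivial eigenspaces
  have hE3 : Module.End.eigenspace Y (-3 : ℂ) = ⊥ := by
    have : Module.End.eigenspace Y (-3 : ℂ) ≤ ⊥ := by
      rw [← hbot, he3]; exact le_sup_right
    exact le_bot_iff.mp this
  have hE4 : Module.End.eigenspace Y (-4 : ℂ) = ⊥ := by
    have : Module.End.eigenspace Y (-4 : ℂ) ≤ ⊥ := by
      rw [← hW4, he4]; exact le_sup_right
    exact le_bot_iff.mp this
  -- W(-2) is an eigenspace for both gradings
  have hW2 : W (-2) = Module.End.eigenspace Y (-2 : ℂ) := by
    rw [he2, hbot, bot_sup_eq]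
  have hW2' : W (-2) = Module.End.eigenspace Y' (-2 : ℂ) := by
    rw [he2', hbot, bot_sup_eq]
  -- N₂ shifts Y-eigenspaces by -2
  have hmap₂ : ∀ (μ : ℂ), ∀ v ∈ Module.End.eigenspace Y μ,
      N₂ v ∈ Module.End.eigenspace Y (μ - 2) := by
    intro μ v hv
    rw [Module.End.mem_eigenspace_iff] at hv ⊢
    have h := congrArg (fun f : Module.End ℂ V => f v) hYN₂
    simp only [Ring.lie_def, LinearMap.sub_apply, Module.End.mul_apply,
      LinearMap.smul_apply] at h
    rw [hv, map_smul] at h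
    have : Y (N₂ v) = μ • N₂ v + (-2 : ℂ) • N₂ v := by
      rw [← h]; abel
    rw [this, sub_smul]
    module
  -- N₀ preserves Y-eigenspaces
  have hmap₀ : ∀ (μ : ℂ), ∀ v ∈ Module.End.eigenspace Y μ,
      N₀ v ∈ Module.End.eigenspace Y μ := by
    intro μ v hv
    rw [Module.End.mem_eigenspace_iff] at hv ⊢
    have h := congrArg (fun f : Module.End ℂ V => f v) hYN₀
    simp only [Ring.lie_def, LinearMap.sub_apply, Module.End.mul_apply,
      LinearMap.zero_apply] at h
    rw [hv, map_smul] at h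
    rw [sub_eq_zero] at h
    exact h
  -- N₂ kills W(-1)
  have hN₂W1 : ∀ v ∈ W (-1), N₂ v = 0 := by
    intro v hv
    rw [he1] at hv
    obtain ⟨a, ha, b, hb, rfl⟩ := Submodule.mem_sup.mp hv
    rw [hW2] at ha
    have h1 : N₂ a = 0 := by
      have := hmap₂ _ _ ha
      rw [show ((-2 : ℂ) - 2) = -4 by norm_num, hE4, Submodule.mem_bot] at this
      exact this
    have h2 : N₂ b = 0 := by
      have := hmap₂ _ _ hb
      rw [show ((-1 : ℂ) - 2) = -3 by norm_num, hE3, Submodule.mem_bot] at this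
      exact this
    rw [map_add, h1, h2, add_zero]
  -- N kills W(-2)
  have hNW2 : ∀ v ∈ W (-2), N v = 0 := by
    intro v hv
    have h2 : N₂ v = 0 := hN₂W1 v (hmono (by norm_num) hv)
    rw [hW2] at hv
    rw [hN, LinearMap.add_apply, hvan₂ v hv, h2, add_zero]
  -- Y' maps everything into W(-1)
  have hY'W1 : ∀ v ∈ W (-1), Y' v ∈ W (-1) := by
    intro v hv
    rw [he1'] at hv ⊢
    obtain ⟨a, ha, b, hb, rfl⟩ := Submodule.mem_sup.mp hv
    rw [map_add]
    refine Submodule.add_mem _ ?_ ?_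
    · have ha2 := ha; rw [hW2', Module.End.mem_eigenspace_iff] at ha2
      rw [ha2]
      exact Submodule.mem_sup_left (Submodule.smul_mem _ _ ha)
    · have hb2 := hb; rw [Module.End.mem_eigenspace_iff] at hb2
      rw [hb2]
      exact Submodule.mem_sup_right (Submodule.smul_mem _ _ hb)
  have hY'V : ∀ v : V, Y' v ∈ W (-1) := by
    intro v
    have hv : v ∈ W 0 := htop ▸ Submodule.mem_top
    rw [he0'] at hv
    obtain ⟨a, ha, b, hb, rfl⟩ := Submodule.mem_sup.mp hv
    rw [map_add, LinearMap.mem_ker.mp hb, add_zero]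
    exact hY'W1 a ha
  -- the two maps agree on W(-1)
  have hagree₁ : ∀ v ∈ W (-1), ⁅Y', N⁆ v = (-2 : ℂ) • N₂ v := by
    intro v hv
    have h1 : ⁅Y', N⁆ v ∈ W (-3) := by
      have := hbr (-1) v hv
      norm_num at this
      exact this
    rw [hbot, Submodule.mem_bot] at h1
    rw [h1, hN₂W1 v hv, smul_zero]
  -- the two maps agree on E₀(Y)
  have hagree₀ : ∀ v ∈ LinearMap.ker Y, ⁅Y', N⁆ v = (-2 : ℂ) • N₂ v := by
    intro v hv
    rw [← Module.End.eigenspace_zero] at hv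
    have hNv : N v = N₂ v := by
      rw [hN, LinearMap.add_apply, hvan₀ v hv, zero_add]
    have hNvW2 : N v ∈ W (-2) := by
      rw [hNv, hW2]
      have := hmap₂ _ _ hv
      rwa [show ((0 : ℂ) - 2) = -2 by norm_num] at this
    have hY'Nv : Y' (N v) = (-2 : ℂ) • N₂ v := by
      have := hNvW2
      rw [hW2', Module.End.mem_eigenspace_iff] at this
      rw [this, hNv]
    have hbrv : ⁅Y', N⁆ v = (-2 : ℂ) • N₂ v - N (Y' v) := by
      rw [Ring.lie_def, LinearMap.sub_apply, Module.End.mul_apply, Module.End.mul_apply,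
        hY'Nv]
    have hNYv0 : N (Y' v) = 0 := by
      -- N (Y' v) lands in W(-2)
      have hmem : N (Y' v) ∈ W (-2) := by
        have hv0 : v ∈ W 0 := htop ▸ Submodule.mem_top
        have h1 : ⁅Y', N⁆ v ∈ W (-2) := by
          have := hbr 0 v hv0
          norm_num at this
          exact this
        have : N (Y' v) = (-2 : ℂ) • N₂ v - ⁅Y', N⁆ v := by
          rw [hbrv]; abel
        rw [this]
        refine Submodule.sub_mem _ ?_ h1
        exact Submodule.smul_mem _ _ (hW2 ▸ (by
          have := hmap₂ _ _ hv
          rwa [show ((0 : ℂ) - 2) = -2 by norm_num] at this))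
      -- decompose Y' v along W(-1) = W(-2) ⊔ E₋₁(Y)
      have hYv : Y' v ∈ W (-1) := hY'V v
      rw [he1] at hYv
      obtain ⟨p, hp, q, hq, hpq⟩ := Submodule.mem_sup.mp hYv
      have hNp : N p = 0 := hNW2 p hp
      have hN₂q : N₂ q = 0 := by
        have := hmap₂ _ _ hq
        rw [show ((-1 : ℂ) - 2) = -3 by norm_num, hE3, Submodule.mem_bot] at this
        exact this
      have hNq : N q = N₀ q := by
        rw [hN, LinearMap.add_apply, hN₂q, add_zero]
      have hNYv : N (Y' v) = N₀ q := by
        rw [← hpq, map_add, hNp, zero_add, hNq]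
      have hmem₂ : N₀ q ∈ W (-2) := hNYv ▸ hmem
      have hmemE : N₀ q ∈ Module.End.eigenspace Y (-1 : ℂ) := hmap₀ _ _ hq
      have : N₀ q = 0 := (Submodule.disjoint_def.mp hd1) _ hmem₂ hmemE
      rw [hNYv, this]
    rw [hbrv, hNYv0, sub_zero]
  -- conclude
  ext v
  have hv : v ∈ W 0 := htop ▸ Submodule.mem_top
  rw [he0] at hv
  obtain ⟨a, ha, b, hb, rfl⟩ := Submodule.mem_sup.mp hv
  simp only [LinearMap.smul_apply, map_add, smul_add]
  rw [hagree₁ a ha, hagree₀ b hb]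
end
end
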